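/- In the weighted polynomial ring M = ℂ[Q,R] with deg Q = 4, deg R = 6, equipped with the derivation D determined by D(Q) = -⅓ R (after normalization D(Q) = c₁ R, D(R) = c₂ Q² with the Ramanujan relations), if I ⊆ M is a nonzero graded ideal stable under D such that the quotient M/I has no nonzero element annihilated by Δ = (Q³ - R²)/1728, then I = M. -/

import Mathlib

open MvPolynomial

noncomputable section

/-- The ring of modular forms, modeled as a weighted polynomial ring `ℂ[Q,R]`,
`Q` of weight 4, `R` of weight 6. -/
abbrev MM := MvPolynomial (Fin 2) ℂ

def Qg : MM := X 0
def Rg : MM := X 1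

/-- The weights: `deg Q = 4`, `deg R = 6`. -/
def wt : Fin 2 → ℕ := ![4, 6]

/-- The Serre derivation, determined by `D(Q) = -(1/3) R` and `D(R) = -(1/2) Q²`. -/
def Dser : Derivation ℂ MM MM :=
  mkDerivation ℂ ![(-(1/3 : ℂ)) • Rg, (-(1/2 : ℂ)) • Qg ^ 2]

/-- `Δ = (Q³ - R²)/1728`. -/
def Δg : MM := (1/1728 : ℂ) • (Qg ^ 3 - Rg ^ 2)

/-- An ideal is graded (w.r.t. the weighted grading) if it is spanned by its
weighted-homogeneous elements. -/
def IsGradedIdeal (I : Ideal MM) : Prop :=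
  I = Ideal.span {x : MM | x ∈ I ∧ ∃ n : ℕ, x ∈ weightedHomogeneousSubmodule ℂ wt n}

/-! ### Auxiliary lemmas -/

lemma coeff_pderiv' (i : Fin 2) (f : MM) (m : Fin 2 →₀ ℕ) :
    coeff m (pderiv i f) = (m i + 1 : ℕ) * coeff (m + Finsupp.single i 1) f := by
  induction f using MvPolynomial.induction_on' with
  | monomial s a =>
    rw [pderiv_monomial, coeff_monomial, coeff_monomial]
    split_ifs with h1 h2 h2
    · -- s - single i 1 = m and s = m + single i 1
      have hs : s i = m i + 1 := by
        rw [h2]; simp [Finsupp.add_apply, Finsupp.single_apply]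
      rw [hs]; push_cast; ring
    · -- s - single i 1 = m but s ≠ m + single i 1 : then s i = 0
      have hs : s i = 0 := by
        by_contra hs0
        apply h2
        rw [← h1]
        exact (tsub_add_cancel_of_le
          (Finsupp.single_le_iff.mpr (Nat.one_le_iff_ne_zero.mpr hs0))).symm
      rw [hs]; simp
    · -- s ≠ m - single but s = m + single : contradiction
      exfalso; apply h1; rw [h2]; simp
    · simp
  | add p q hp hq => simp [map_add, coeff_add, hp, hq, mul_add]

lemma eq_C_of_pderiv_eq_zero {f : MM} (h : ∀ i, pderiv i f = 0) : f = C (coeff 0 f) := by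
  ext m
  rcases eq_or_ne m 0 with rfl | hm
  · simp
  · obtain ⟨i, hi⟩ : ∃ i, m i ≠ 0 := by
      by_contra hc; push_neg at hc; exact hm (Finsupp.ext hc)
    have h2 : m - Finsupp.single i 1 + Finsupp.single i 1 = m :=
      tsub_add_cancel_of_le (Finsupp.single_le_iff.mpr (Nat.one_le_iff_ne_zero.mpr hi))
    have h3 := coeff_pderiv' i f (m - Finsupp.single i 1)
    rw [h i, h2, coeff_zero] at h3
    have h4 : coeff m f = 0 := by
      rcases mul_eq_zero.mp h3.symm with h5 | h5
      · exact absurd (Nat.cast_eq_zero.mp h5) (Nat.succ_ne_zero _)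
      · exact h5
    simp [coeff_C, hm, h4, Ne.symm hm]

lemma totalDegree_pderiv_lt {f : MM} (i : Fin 2) (hf : f.totalDegree ≠ 0) :
    (pderiv i f).totalDegree < f.totalDegree := by
  rw [totalDegree]
  rw [Finset.sup_lt_iff (show (⊥ : ℕ) < f.totalDegree from Nat.pos_of_ne_zero hf)]
  intro m hm
  have hc : coeff m (pderiv i f) ≠ 0 := mem_support_iff.1 hm
  rw [coeff_pderiv'] at hc
  have h2 : coeff (m + Finsupp.single i 1) f ≠ 0 := by
    intro h; rw [h, mul_zero] at hc; exact hc rfl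
  have h3 := le_totalDegree (mem_support_iff.2 h2)
  have hsum : ((m + Finsupp.single i 1).sum fun _ e => e) =
      (m.sum fun _ e => e) + 1 := by
    rw [Finsupp.sum_add_index' (fun _ => rfl) (fun _ _ _ => rfl),
      Finsupp.sum_single_index rfl]
  omega

lemma X_mul_pderiv_monomial (i : Fin 2) (m : Fin 2 →₀ ℕ) (c : ℂ) :
    (X i : MM) * pderiv i (monomial m c) = monomial m (c * m i) := by
  rw [pderiv_monomial]
  rcases Nat.eq_zero_or_pos (m i) with h | h
  · simp [h]
  · rw [show (X i : MM) = monomial (Finsupp.single i 1) 1 from rfl, monomial_mul, one_mul]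
    rw [show Finsupp.single i 1 + (m - Finsupp.single i 1) = m from by
      rw [add_comm]; exact tsub_add_cancel_of_le (Finsupp.single_le_iff.mpr h)]

lemma weight_wt (m : Fin 2 →₀ ℕ) : Finsupp.weight wt m = m 0 * 4 + m 1 * 6 := by
  rw [Finsupp.weight_apply, Finsupp.sum_fintype _ _ (fun i => by simp), Fin.sum_univ_two]
  simp [wt]

lemma euler {n : ℕ} {h : MM} (hh : IsWeightedHomogeneous wt h n) :
    C (n : ℂ) * h = 4 * (Qg * pderiv 0 h) + 6 * (Rg * pderiv 1 h) := by
  conv_lhs => rw [h.as_sum]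
  conv_rhs => rw [h.as_sum]
  rw [map_sum (pderiv 0), map_sum (pderiv 1)]
  simp only [Finset.mul_sum]
  rw [← Finset.sum_add_distrib]
  refine Finset.sum_congr rfl fun m hm => ?_
  have hw : m 0 * 4 + m 1 * 6 = n := by
    rw [← weight_wt]; exact hh (mem_support_iff.1 hm)
  rw [show Qg = (X 0 : MM) from rfl, show Rg = (X 1 : MM) from rfl,
    X_mul_pderiv_monomial, X_mul_pderiv_monomial, C_mul_monomial,
    show (4 : MM) = C (4 : ℂ) from (map_ofNat C 4).symm,
    show (6 : MM) = C (6 : ℂ) from (map_ofNat C 6).symm,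
    C_mul_monomial, C_mul_monomial, ← map_add]
  congr 1
  rw [← hw]
  push_cast
  ring

lemma Dser_apply (f : MM) :
    Dser f = C (-(1/3 : ℂ)) * (Rg * pderiv 0 f) + C (-(1/2 : ℂ)) * (Qg ^ 2 * pderiv 1 f) := by
  have : Dser = ((-(1/3 : ℂ)) • Rg) • (pderiv 0 : Derivation ℂ MM MM)
      + ((-(1/2 : ℂ)) • Qg ^ 2) • (pderiv 1 : Derivation ℂ MM MM) := by
    apply derivation_ext
    intro i
    fin_cases i <;>
      simp [Dser, mkDerivation_X, Derivation.smul_apply, pderiv_X_self, pderiv_X_of_ne]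
  rw [this]
  simp only [Derivation.add_apply, Derivation.smul_apply, smul_eq_mul]
  rw [smul_eq_C_mul, smul_eq_C_mul]
  ring

lemma six_Dser (f : MM) :
    6 * Dser f = (-2) * (Rg * pderiv 0 f) + (-3) * (Qg ^ 2 * pderiv 1 f) := by
  have e1 : (6 : MM) * C (-(1/3 : ℂ)) = -2 := by
    rw [show (6 : MM) = C (6 : ℂ) from (map_ofNat C 6).symm, ← map_mul,
      show (6 : ℂ) * -(1/3) = -2 by norm_num, map_neg, map_ofNat]
  have e2 : (6 : MM) * C (-(1/2 : ℂ)) = -3 := by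
    rw [show (6 : MM) = C (6 : ℂ) from (map_ofNat C 6).symm, ← map_mul,
      show (6 : ℂ) * -(1/2) = -3 by norm_num, map_neg, map_ofNat]
  rw [Dser_apply, mul_add, ← mul_assoc, e1,
    show (6 : MM) * (C (-(1/2 : ℂ)) * (Qg ^ 2 * pderiv 1 f))
      = (6 : MM) * C (-(1/2 : ℂ)) * (Qg ^ 2 * pderiv 1 f) from (mul_assoc _ _ _).symm, e2]

lemma key0 {n : ℕ} {h : MM} (hh : IsWeightedHomogeneous wt h n) :
    12 * ((Qg ^ 3 - Rg ^ 2) * pderiv 0 h)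
      = 3 * Qg ^ 2 * (C (n : ℂ) * h) + 6 * Rg * (6 * Dser h) := by
  have hE := euler hh
  have hd := six_Dser h
  linear_combination (-3 * Qg ^ 2) * hE + (-6 * Rg) * hd

lemma key1 {n : ℕ} {h : MM} (hh : IsWeightedHomogeneous wt h n) :
    6 * ((Qg ^ 3 - Rg ^ 2) * pderiv 1 h)
      = -(Rg * (C (n : ℂ) * h)) - 2 * Qg * (6 * Dser h) := by
  have hE := euler hh
  have hd := six_Dser h
  linear_combination Rg * hE + 2 * Qg * hd

lemma pderiv_mem {I : Ideal MM} (hgr : IsGradedIdeal I) (hD : ∀ f ∈ I, Dser f ∈ I)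
    (hann : ∀ x : MM, Δg * x ∈ I → x ∈ I) :
    ∀ f ∈ I, ∀ i, pderiv i f ∈ I := by
  have base : ∀ h ∈ I, ∀ n : ℕ, IsWeightedHomogeneous wt h n → ∀ i : Fin 2,
      pderiv i h ∈ I := by
    intro h hI n hw i
    have hDh : Dser h ∈ I := hD h hI
    have hkey : (Qg ^ 3 - Rg ^ 2) * pderiv i h ∈ I := by
      fin_cases i
      · show (Qg ^ 3 - Rg ^ 2) * pderiv 0 h ∈ I
        have k := key0 hw
        have hmem : (12 : MM) * ((Qg ^ 3 - Rg ^ 2) * pderiv 0 h) ∈ I := by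
          rw [k]
          exact I.add_mem (I.mul_mem_left _ (I.mul_mem_left _ hI))
            (I.mul_mem_left _ (I.mul_mem_left _ hDh))
        have h12 : (Qg ^ 3 - Rg ^ 2) * pderiv 0 h
            = C (1/12 : ℂ) * ((12 : MM) * ((Qg ^ 3 - Rg ^ 2) * pderiv 0 h)) := by
          rw [show (12 : MM) = C (12 : ℂ) from (map_ofNat C 12).symm, ← mul_assoc, ← map_mul,
            show (1/12 : ℂ) * 12 = 1 by norm_num, map_one, one_mul]
        rw [h12]
        exact I.mul_mem_left _ hmem
      · show (Qg ^ 3 - Rg ^ 2) * pderiv 1 h ∈ I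
        have k := key1 hw
        have hmem : (6 : MM) * ((Qg ^ 3 - Rg ^ 2) * pderiv 1 h) ∈ I := by
          rw [k]
          exact I.sub_mem (I.neg_mem (I.mul_mem_left _ (I.mul_mem_left _ hI)))
            (I.mul_mem_left _ (I.mul_mem_left _ hDh))
        have h6 : (Qg ^ 3 - Rg ^ 2) * pderiv 1 h
            = C (1/6 : ℂ) * ((6 : MM) * ((Qg ^ 3 - Rg ^ 2) * pderiv 1 h)) := by
          rw [show (6 : MM) = C (6 : ℂ) from (map_ofNat C 6).symm, ← mul_assoc, ← map_mul,
            show (1/6 : ℂ) * 6 = 1 by norm_num, map_one, one_mul]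
        rw [h6]
        exact I.mul_mem_left _ hmem
    apply hann
    rw [Δg, smul_eq_C_mul, mul_assoc]
    exact I.mul_mem_left _ hkey
  intro f hf
  have hf' : f ∈ Ideal.span {x : MM | x ∈ I ∧ ∃ n : ℕ,
      x ∈ weightedHomogeneousSubmodule ℂ wt n} := by
    rw [← hgr]; exact hf
  have main : f ∈ I ∧ pderiv 0 f ∈ I ∧ pderiv 1 f ∈ I := by
    refine Submodule.span_induction (p := fun x _ => x ∈ I ∧ pderiv 0 x ∈ I ∧ pderiv 1 x ∈ I)
      ?_ ?_ ?_ ?_ hf'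
    · rintro x ⟨hxI, n, hxh⟩
      rw [mem_weightedHomogeneousSubmodule] at hxh
      exact ⟨hxI, base x hxI n hxh 0, base x hxI n hxh 1⟩
    · simp
    · rintro x y _ _ ⟨hx, hx0, hx1⟩ ⟨hy, hy0, hy1⟩
      exact ⟨I.add_mem hx hy, by rw [map_add]; exact I.add_mem hx0 hy0,
        by rw [map_add]; exact I.add_mem hx1 hy1⟩
    · rintro a x _ ⟨hx, hx0, hx1⟩
      refine ⟨I.smul_mem a hx, ?_, ?_⟩
      · rw [smul_eq_mul, pderiv_mul]
        exact I.add_mem (I.mul_mem_left _ hx) (I.mul_mem_left _ hx0)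
      · rw [smul_eq_mul, pderiv_mul]
        exact I.add_mem (I.mul_mem_left _ hx) (I.mul_mem_left _ hx1)
  intro i
  fin_cases i
  · exact main.2.1
  · exact main.2.2

lemma const_mem_one {I : Ideal MM} {f : MM} (hfI : f ∈ I) (hf0 : f ≠ 0)
    (h : f.totalDegree = 0) : (1 : MM) ∈ I := by
  have hall := (totalDegree_eq_zero_iff (Fin 2) f).1 h
  have hfC : f = C (coeff 0 f) := by
    ext m
    rcases eq_or_ne m 0 with rfl | hm
    · simp
    · have hm' : m ∉ f.support := fun hs => hm (Finsupp.ext fun x => hall m hs x)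
      rw [notMem_support_iff] at hm'
      simp [hm', coeff_C, Ne.symm hm]
  set c := coeff 0 f with hcdef
  have hc : c ≠ 0 := fun h0 => hf0 (by rw [hfC, h0, map_zero])
  have hmem : C c⁻¹ * f ∈ I := I.mul_mem_left _ hfI
  rw [hfC] at hmem
  rwa [← map_mul, inv_mul_cancel₀ hc, map_one] at hmem

/-- If `I` is a nonzero graded `d`-ideal of `M = ℂ[Q,R]` such that `M/I` has no nonzero
element annihilated by `Δ`, then `I = M`. -/
theorem graded_d_ideal_eq_top (I : Ideal MM) (hne : I ≠ ⊥) (hgr : IsGradedIdeal I)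
    (hD : ∀ f ∈ I, Dser f ∈ I)
    (hann : ∀ x : MM, Δg * x ∈ I → x ∈ I) :
    I = ⊤ := by
  have hpd : ∀ f ∈ I, ∀ i, pderiv i f ∈ I := pderiv_mem hgr hD hann
  obtain ⟨f, hfI, hf0⟩ := Submodule.exists_mem_ne_zero_of_ne_bot hne
  have key : ∀ d : ℕ, ∀ g : MM, g ∈ I → g ≠ 0 → g.totalDegree ≤ d → (1 : MM) ∈ I := by
    intro d
    induction d with
    | zero =>
      intro g hgI hg0 hdeg
      exact const_mem_one hgI hg0 (Nat.le_zero.mp hdeg)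
    | succ d ih =>
      intro g hgI hg0 hdeg
      by_cases hC : g.totalDegree = 0
      · exact const_mem_one hgI hg0 hC
      · obtain ⟨i, hi⟩ : ∃ i, pderiv i g ≠ 0 := by
          by_contra hc
          push_neg at hc
          rw [eq_C_of_pderiv_eq_zero hc] at hC
          exact hC (totalDegree_C _)
        have hlt := totalDegree_pderiv_lt i hC
        exact ih (pderiv i g) (hpd g hgI i) hi (by omega)
  have h1 : (1 : MM) ∈ I := key f.totalDegree f hfI hf0 le_rfl
  rwa [Ideal.eq_top_iff_one]

end
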